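/- Let p be a prime and let α, β ∈ Z_{p^2} = Z/p^2Z be such that neither α nor β is congruent to 0 or 1 modulo p. Then the affine quandles on Z_{p^2} with operations x ▷ y = (1−α)x + αy and x ▷ y = (1−β)x + βy are isomorphic as quandles if and only if α = β. -/

import Mathlib

/-- A binary operation is a rack operation if all left translations are bijective
and the operation is left self-distributive. -/
def IsRack {X : Type*} (op : X → X → X) : Prop :=
  (∀ x, Function.Bijective (op x)) ∧
  ∀ x y z, op x (op y z) = op (op x y) (op x z)

/-- A quandle is a rack in which every element is idempotent. -/
def IsQuandle {X : Type*} (op : X → X → X) : Prop :=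
  IsRack op ∧ ∀ x, op x x = x

/-- A rack is decomposable if it splits as a disjoint union of two nonempty
invariant subsets. -/
def IsDecomposable {X : Type*} (op : X → X → X) : Prop :=
  ∃ Y Z : Set X, Y.Nonempty ∧ Z.Nonempty ∧ Disjoint Y Z ∧ Y ∪ Z = Set.univ ∧
    (∀ x, op x '' Y = Y) ∧ (∀ x, op x '' Z = Z)

/-- Two binary operations are isomorphic as racks if there is a bijection
intertwining them. -/
def IsRackIso {X Y : Type*} (opX : X → X → X) (opY : Y → Y → Y) : Prop :=
  ∃ f : X ≃ Y, ∀ a b, f (opX a b) = opY (f a) (f b)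

/-- The affine (Alexander) quandle operation attached to an automorphism `g`
of an abelian group `A` : `x ▷ y = (x - g x) + g y`. -/
def affineOp {A : Type*} [AddCommGroup A] (g : A ≃+ A) : A → A → A :=
  fun x y => (x - g x) + g y

/-- For `α, β ∈ Z_{p^2}` neither congruent to `0` nor `1` mod `p`,
the affine quandles `(Z_{p^2}, α)` and `(Z_{p^2}, β)` are isomorphic iff `α = β`. -/
theorem affine_quandle_Zpsq_iso_iff_eq
    (p : ℕ) (hp : p.Prime) (α β : ZMod (p ^ 2))
    (hα0 : ZMod.castHom (dvd_pow_self p (by norm_num : (2 : ℕ) ≠ 0)) (ZMod p) α ≠ 0)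
    (hα1 : ZMod.castHom (dvd_pow_self p (by norm_num : (2 : ℕ) ≠ 0)) (ZMod p) α ≠ 1)
    (hβ0 : ZMod.castHom (dvd_pow_self p (by norm_num : (2 : ℕ) ≠ 0)) (ZMod p) β ≠ 0)
    (hβ1 : ZMod.castHom (dvd_pow_self p (by norm_num : (2 : ℕ) ≠ 0)) (ZMod p) β ≠ 1) :
    IsRackIso (fun x y : ZMod (p ^ 2) => (1 - α) * x + α * y)
        (fun x y : ZMod (p ^ 2) => (1 - β) * x + β * y) ↔
      α = β := by
  have hne : NeZero (p ^ 2) := ⟨pow_ne_zero 2 hp.pos.ne'⟩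
  constructor
  · rintro ⟨f, hf⟩
    simp only at hf
    -- any element with nonzero residue mod p is a unit
    have hunit : ∀ x : ZMod (p ^ 2),
        ZMod.castHom (dvd_pow_self p (by norm_num : (2 : ℕ) ≠ 0)) (ZMod p) x ≠ 0 →
          IsUnit x := by
      intro x hx
      have hx' : ¬ p ∣ x.val := by
        intro hdvd
        apply hx
        rw [ZMod.castHom_apply, ← ZMod.natCast_val,
          ZMod.natCast_eq_zero_iff]
        exact hdvd
      have hcop : Nat.Coprime x.val (p ^ 2) :=
        Nat.Coprime.pow_right 2 (Nat.coprime_comm.mp (hp.coprime_iff_not_dvd.mpr hx'))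
      have := (ZMod.isUnit_iff_coprime x.val (p ^ 2)).mpr hcop
      rwa [ZMod.natCast_rightInverse x] at this
    have hAu : IsUnit (1 - α) := by
      apply hunit
      rw [map_sub, map_one]
      intro h
      exact hα1 (sub_eq_zero.mp h).symm
    have hau : IsUnit α := hunit α hα0
    set g : ZMod (p ^ 2) → ZMod (p ^ 2) := fun x => f x - f 0 with hg
    have hg0 : g 0 = 0 := sub_self _
    have hkey : ∀ a b, g ((1 - α) * a + α * b) = (1 - β) * g a + β * g b := by
      intro a b
      simp only [hg]
      rw [hf a b]
      ring
    have hgmul : ∀ b, g (α * b) = β * g b := by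
      intro b
      have := hkey 0 b
      simpa [hg0] using this
    have hgsub : ∀ a, g ((1 - α) * a) = (1 - β) * g a := by
      intro a
      have := hkey a 0
      simpa [hg0] using this
    have hadd : ∀ u v, g (u + v) = g u + g v := by
      intro u v
      have ha : (1 - α) * (↑hAu.unit⁻¹ * u) = u := by
        rw [← mul_assoc, hAu.mul_val_inv, one_mul]
      have hb : α * (↑hau.unit⁻¹ * v) = v := by
        rw [← mul_assoc, hau.mul_val_inv, one_mul]
      have := hkey (↑hAu.unit⁻¹ * u) (↑hau.unit⁻¹ * v)
      rw [ha, hb, ← hgsub, ← hgmul, ha, hb] at this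
      exact this
    set G : ZMod (p ^ 2) →+ ZMod (p ^ 2) := AddMonoidHom.mk' g hadd with hG
    have hlin : ∀ x : ZMod (p ^ 2), g x = x * g 1 := by
      intro x
      have hx : ((x.val : ℕ) : ZMod (p ^ 2)) = x := ZMod.natCast_rightInverse x
      calc g x = G (x.val • (1 : ZMod (p ^ 2))) := by
              rw [nsmul_eq_mul, mul_one, hx]; rfl
        _ = x.val • G 1 := map_nsmul G x.val 1
        _ = (x.val : ZMod (p ^ 2)) * g 1 := by rw [nsmul_eq_mul]; rfl
        _ = x * g 1 := by rw [hx]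
    -- g 1 is a unit
    have hsurj : ∃ x, g x = 1 := by
      obtain ⟨x, hx⟩ := f.surjective (1 + f 0)
      exact ⟨x, by simp [hg, hx]⟩
    obtain ⟨x, hx⟩ := hsurj
    rw [hlin] at hx
    have hc : IsUnit (g 1) := IsUnit.of_mul_eq_one _ ((mul_comm _ _).trans hx)
    have := hgmul 1
    rw [mul_one, hlin α] at this
    exact hc.mul_right_cancel this
  · rintro rfl
    exact ⟨Equiv.refl _, fun a b => rfl⟩
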